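/- Let G be a finite set of nonzero homogeneous polynomials and r_i, r_j, r_k, r_ℓ ∈ G be nonzero with lm(r_k) | lm(r_i) and lm(r_ℓ) | lm(r_j). Suppose r_i = λ_{ik} r_k + Σ_{u∈U} λ_u r_u and r_j = λ_{jℓ} r_ℓ + Σ_{v∈V} λ_v r_v are standard representations (with λ_{ik}, λ_{jℓ} monomials such that lm(r_i) = λ_{ik}·lm(r_k) > lm(λ_u r_u) and lm(r_j) = λ_{jℓ}·lm(r_ℓ) > lm(λ_v r_v)). Let γ_{ij} = lcm(lm(r_i), lm(r_j)) and γ_{kℓ} = lcm(lm(r_k), lm(r_ℓ)). Then γ_{kℓ} | γ_{ij}, and there exists a monomial λ with S(r_i,r_j) = λ·S(r_k,r_ℓ) + Σ_{w∈W} λ_w r_w where W = U ∪ V and γ_{ij} > lm(λ_w r_w) for all nonzero terms, and λ·γ_{kℓ} = γ_{ij}. -/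

import Mathlib

open scoped MonomialOrder

namespace F5

variable {σ K : Type*} [Field K] (mo : MonomialOrder σ)

/-- leading monomial (exponent) of a polynomial w.r.t. a monomial order -/
noncomputable def lm (p : MvPolynomial σ K) : σ →₀ ℕ :=
  mo.toSyn.symm (p.support.sup fun d => mo.toSyn d)

/-- leading coefficient -/
noncomputable def lc (p : MvPolynomial σ K) : K := p.coeff (lm mo p)

/-- S-polynomial -/
noncomputable def Spoly (p q : MvPolynomial σ K) : MvPolynomial σ K :=
  MvPolynomial.monomial ((lm mo p ⊔ lm mo q) - lm mo p) (lc mo q) * p -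
    MvPolynomial.monomial ((lm mo p ⊔ lm mo q) - lm mo q) (lc mo p) * q

/-- standard representation of `p` w.r.t. the finite set `G` -/
def HasStdRep (G : Finset (MvPolynomial σ K)) (p : MvPolynomial σ K) : Prop :=
  p = 0 ∨ ∃ lam : MvPolynomial σ K → MvPolynomial σ K,
    p = ∑ g ∈ G, lam g * g ∧
    ∀ g ∈ G, lam g * g ≠ 0 → lm mo (lam g * g) ≼[mo] lm mo p



section Aux

lemma toSyn_lm (p : MvPolynomial σ K) :
    mo.toSyn (lm mo p) = p.support.sup fun d => mo.toSyn d := by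
  simp [lm]

lemma le_toSyn_lm {p : MvPolynomial σ K} {d : σ →₀ ℕ} (h : d ∈ p.support) :
    mo.toSyn d ≤ mo.toSyn (lm mo p) := by
  rw [toSyn_lm]; exact Finset.le_sup h

lemma lm_lt_of_forall {p : MvPolynomial σ K} {T : mo.syn} (hp : p ≠ 0)
    (h : ∀ d ∈ p.support, mo.toSyn d < T) :
    mo.toSyn (lm mo p) < T := by
  rw [toSyn_lm]
  obtain ⟨d, hd⟩ := MvPolynomial.support_nonempty.mpr hp
  exact Finset.sup_lt_iff (lt_of_le_of_lt bot_le (h d hd)) |>.mpr h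

lemma lm_monomial_mul_le (a : σ →₀ ℕ) (q : MvPolynomial σ K) :
    mo.toSyn (lm mo (MvPolynomial.monomial a (1 : K) * q)) ≤ mo.toSyn (a + lm mo q) := by
  rw [toSyn_lm]
  apply Finset.sup_le
  intro d hd
  rw [MvPolynomial.mem_support_iff, MvPolynomial.coeff_monomial_mul'] at hd
  split_ifs at hd with hle
  · have hm : d - a ∈ q.support := by
      rw [MvPolynomial.mem_support_iff]; intro h0; rw [h0, mul_zero] at hd; exact hd rfl
    have h2 := le_toSyn_lm mo hm
    calc mo.toSyn d = mo.toSyn (a + (d - a)) := by rw [add_tsub_cancel_of_le hle]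
    _ ≤ mo.toSyn (a + lm mo q) := by
        rw [map_add, map_add]; exact add_le_add le_rfl h2
  · exact absurd rfl hd

end Aux

/-- Computational core of the F5-critical-pair rewriting theorem: if `r_i` and
`r_j` have standard representations led by monomial multiples of `r_k` and `r_ℓ`
respectively, then `γ_{kℓ} ∣ γ_{ij}` and
`S(r_i, r_j) = λ · S(r_k, r_ℓ) + ∑_{w ∈ U ∪ V} λ_w r_w`
with `λ · γ_{kℓ} = γ_{ij}` and `lm (λ_w r_w) ≺ γ_{ij}` for all nonzero terms. -/
theorem f5_critical_pair_rewriting {n : ℕ} (mo : MonomialOrder (Fin n)) {K : Type*} [Field K]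
    [DecidableEq (MvPolynomial (Fin n) K)]
    (G : Finset (MvPolynomial (Fin n) K))
    (hG0 : ∀ g ∈ G, g ≠ 0) (hGhom : ∀ g ∈ G, ∃ d, g.IsHomogeneous d)
    (ri rj rk rl : MvPolynomial (Fin n) K)
    (hiG : ri ∈ G) (hjG : rj ∈ G) (hkG : rk ∈ G) (hlG : rl ∈ G)
    (hmonic : lc mo ri = 1 ∧ lc mo rj = 1 ∧ lc mo rk = 1 ∧ lc mo rl = 1)
    (lamik lamjl : Fin n →₀ ℕ)
    (U V : Finset (MvPolynomial (Fin n) K)) (hU : U ⊆ G) (hV : V ⊆ G)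
    (c d : MvPolynomial (Fin n) K → MvPolynomial (Fin n) K)
    (hlmik : lm mo ri = lamik + lm mo rk)
    (hlmjl : lm mo rj = lamjl + lm mo rl)
    (hrepi : ri = MvPolynomial.monomial lamik (1 : K) * rk + ∑ u ∈ U, c u * u)
    (hrepj : rj = MvPolynomial.monomial lamjl (1 : K) * rl + ∑ v ∈ V, d v * v)
    (hUlt : ∀ u ∈ U, c u * u ≠ 0 → (lm mo (c u * u) ≺[mo] lm mo ri))
    (hVlt : ∀ v ∈ V, d v * v ≠ 0 → (lm mo (d v * v) ≺[mo] lm mo rj)) :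
    (lm mo rk ⊔ lm mo rl) ≤ (lm mo ri ⊔ lm mo rj) ∧
    ∃ lam : Fin n →₀ ℕ, lam + (lm mo rk ⊔ lm mo rl) = lm mo ri ⊔ lm mo rj ∧
      ∃ w : MvPolynomial (Fin n) K → MvPolynomial (Fin n) K,
        Spoly mo ri rj =
          MvPolynomial.monomial lam (1 : K) * Spoly mo rk rl + ∑ g ∈ U ∪ V, w g * g ∧
        ∀ g ∈ U ∪ V, w g * g ≠ 0 → (lm mo (w g * g) ≺[mo] (lm mo ri ⊔ lm mo rj)) := by
  obtain ⟨hm1, hm2, hm3, hm4⟩ := hmonic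
  have hki : lm mo rk ≤ lm mo ri := by rw [hlmik]; exact le_add_self
  have hlj : lm mo rl ≤ lm mo rj := by rw [hlmjl]; exact le_add_self
  have hiγ : lm mo ri ≤ lm mo ri ⊔ lm mo rj := le_sup_left
  have hjγ : lm mo rj ≤ lm mo ri ⊔ lm mo rj := le_sup_right
  have hγ' : (lm mo rk ⊔ lm mo rl) ≤ (lm mo ri ⊔ lm mo rj) :=
    sup_le (hki.trans le_sup_left) (hlj.trans le_sup_right)
  set γ := lm mo ri ⊔ lm mo rj with hγdef
  set γ' := lm mo rk ⊔ lm mo rl with hγ'def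
  refine ⟨hγ', γ - γ', tsub_add_cancel_of_le hγ', ?_⟩
  set lam := γ - γ' with hlamdef
  -- pointwise facts
  have hki' : ∀ x, lm mo rk x ≤ lm mo ri x := Finsupp.le_def.mp hki
  have hlj' : ∀ x, lm mo rl x ≤ lm mo rj x := Finsupp.le_def.mp hlj
  have hiγ' : ∀ x, lm mo ri x ≤ γ x := Finsupp.le_def.mp hiγ
  have hjγ' : ∀ x, lm mo rj x ≤ γ x := Finsupp.le_def.mp hjγ
  have hγ'γ : ∀ x, γ' x ≤ γ x := Finsupp.le_def.mp hγ'
  have hγ'x : ∀ x, γ' x = max (lm mo rk x) (lm mo rl x) := fun x => by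
    rw [hγ'def]; exact Finsupp.sup_apply (lm mo rk) (lm mo rl) x
  have hlmik' : ∀ x, lm mo ri x = lamik x + lm mo rk x := fun x => by
    rw [hlmik]; rfl
  have hlmjl' : ∀ x, lm mo rj x = lamjl x + lm mo rl x := fun x => by
    rw [hlmjl]; rfl
  have e1 : (γ - lm mo ri) + lamik = lam + (γ' - lm mo rk) := by
    ext x
    simp only [Finsupp.add_apply, Finsupp.tsub_apply, hlamdef]
    have := hlmik' x; have := hiγ' x; have := hγ'γ x; have h4 := hγ'x x
    omega
  have e2 : (γ - lm mo rj) + lamjl = lam + (γ' - lm mo rl) := by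
    ext x
    simp only [Finsupp.add_apply, Finsupp.tsub_apply, hlamdef]
    have := hlmjl' x; have := hjγ' x; have := hγ'γ x; have h4 := hγ'x x
    omega
  have keyi : ∀ a b : Fin n →₀ ℕ, a + lamik = lam + b →
      MvPolynomial.monomial a (1 : K) * ri =
        MvPolynomial.monomial lam (1 : K) * (MvPolynomial.monomial b (1 : K) * rk) +
          MvPolynomial.monomial a (1 : K) * ∑ u ∈ U, c u * u := by
    intro a b hab
    rw [hrepi, mul_add, ← mul_assoc, ← mul_assoc, MvPolynomial.monomial_mul,
      MvPolynomial.monomial_mul, mul_one, hab]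
  have keyj : ∀ a b : Fin n →₀ ℕ, a + lamjl = lam + b →
      MvPolynomial.monomial a (1 : K) * rj =
        MvPolynomial.monomial lam (1 : K) * (MvPolynomial.monomial b (1 : K) * rl) +
          MvPolynomial.monomial a (1 : K) * ∑ v ∈ V, d v * v := by
    intro a b hab
    rw [hrepj, mul_add, ← mul_assoc, ← mul_assoc, MvPolynomial.monomial_mul,
      MvPolynomial.monomial_mul, mul_one, hab]
  classical
  refine ⟨fun g =>
    (if g ∈ U then MvPolynomial.monomial (γ - lm mo ri) (1 : K) * c g else 0) -
      (if g ∈ V then MvPolynomial.monomial (γ - lm mo rj) (1 : K) * d g else 0), ?_, ?_⟩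
  · have hsum : (∑ g ∈ U ∪ V,
        ((if g ∈ U then MvPolynomial.monomial (γ - lm mo ri) (1 : K) * c g else 0) -
          (if g ∈ V then MvPolynomial.monomial (γ - lm mo rj) (1 : K) * d g else 0)) * g) =
        MvPolynomial.monomial (γ - lm mo ri) (1 : K) * ∑ u ∈ U, c u * u -
          MvPolynomial.monomial (γ - lm mo rj) (1 : K) * ∑ v ∈ V, d v * v := by
      simp only [sub_mul, ite_mul, zero_mul, Finset.sum_sub_distrib, Finset.sum_ite_mem,
        Finset.union_inter_cancel_left, Finset.union_inter_cancel_right, Finset.mul_sum,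
        mul_assoc]
    rw [hsum, Spoly, Spoly, hm1, hm2, hm3, hm4, ← hγdef, ← hγ'def,
      keyi _ _ e1, keyj _ _ e2]
    ring
  · intro g hg hg0
    have hbound : ∀ d' ∈ (((if g ∈ U then MvPolynomial.monomial (γ - lm mo ri) (1 : K) * c g else 0) -
        (if g ∈ V then MvPolynomial.monomial (γ - lm mo rj) (1 : K) * d g else 0)) * g).support,
        mo.toSyn d' < mo.toSyn γ := by
      intro d' hd'
      rw [sub_mul] at hd'
      have hmem := MvPolynomial.support_sub (Fin n)
        ((if g ∈ U then MvPolynomial.monomial (γ - lm mo ri) (1 : K) * c g else 0) * g)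
        ((if g ∈ V then MvPolynomial.monomial (γ - lm mo rj) (1 : K) * d g else 0) * g) hd'
      have hpiece : ∀ (a L : Fin n →₀ ℕ) (e : MvPolynomial (Fin n) K),
          a + L = γ → (e * g ≠ 0 → lm mo (e * g) ≺[mo] L) →
          d' ∈ (MvPolynomial.monomial a (1 : K) * e * g).support → mo.toSyn d' < mo.toSyn γ := by
        intro a L e haL he hd
        have hne : e * g ≠ 0 := by
          intro h0
          rw [mul_assoc, h0, mul_zero, MvPolynomial.support_zero] at hd
          exact absurd hd (Finset.notMem_empty d')
        have h1 : mo.toSyn d' ≤ mo.toSyn (lm mo (MvPolynomial.monomial a (1 : K) * (e * g))) := by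
          apply le_toSyn_lm
          rwa [← mul_assoc]
        refine lt_of_le_of_lt (h1.trans (lm_monomial_mul_le mo a (e * g))) ?_
        have := he hne
        calc mo.toSyn (a + lm mo (e * g)) = mo.toSyn a + mo.toSyn (lm mo (e * g)) := map_add _ _ _
          _ < mo.toSyn a + mo.toSyn L := by exact add_lt_add_of_le_of_lt le_rfl this
          _ = mo.toSyn (a + L) := (map_add _ _ _).symm
          _ = mo.toSyn γ := by rw [haL]
      rcases Finset.mem_union.mp hmem with hd | hd
      · by_cases hgU : g ∈ U
        · rw [if_pos hgU] at hd
          exact hpiece _ (lm mo ri) (c g) (tsub_add_cancel_of_le hiγ) (hUlt g hgU) hd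
        · rw [if_neg hgU, zero_mul, MvPolynomial.support_zero] at hd
          exact absurd hd (Finset.notMem_empty d')
      · by_cases hgV : g ∈ V
        · rw [if_pos hgV] at hd
          exact hpiece _ (lm mo rj) (d g) (tsub_add_cancel_of_le hjγ) (hVlt g hgV) hd
        · rw [if_neg hgV, zero_mul, MvPolynomial.support_zero] at hd
          exact absurd hd (Finset.notMem_empty d')
    exact lm_lt_of_forall mo hg0 hbound
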